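/- For every k ∈ {0,1,…,n} there exists a symplectic matrix H_k ∈ Sp(2n,R) such that the rank of 𝔛(H_k) equals 2k. Concretely, the map (x',x'',ξ',ξ'') ↦ (x',−ξ'',ξ',x'') (with x',ξ' ∈ R^k, x'',ξ'' ∈ R^{n−k}) is symplectic and its image under 𝔛 has rank 2k. -/

import Mathlib

open Matrix

theorem card_aux (n k : ℕ) (hk : k ≤ n) :
    (Finset.filter (fun x : Fin n => ↑x < k) Finset.univ).card = k := by
  have : (Finset.filter (fun x : Fin n => ↑x < k) Finset.univ)
      = Finset.map (Fin.castLEEmb hk) Finset.univ := by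
    ext x
    simp only [Finset.mem_filter, Finset.mem_univ, true_and, Finset.mem_map]
    constructor
    · intro h; exact ⟨⟨x, h⟩, rfl⟩
    · rintro ⟨b, rfl⟩; simp [Fin.castLEEmb]
  rw [this, Finset.card_map, Finset.card_fin]

/-- For each `k ≤ n` there is a symplectic matrix whose image under
`𝔛(H) = J H + Hᵀ J` has rank `2k`; concretely, the matrix of
`(x',x'',ξ',ξ'') ↦ (x',−ξ'',ξ',x'')`, i.e. `fromBlocks P (P−1) (1−P) P`
where `P` projects onto the first `k` coordinates, works. -/
theorem exists_symplectic_rank_X (n k : ℕ) (hk : k ≤ n)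
    (J : Matrix (Fin n ⊕ Fin n) (Fin n ⊕ Fin n) ℝ)
    (hJ : J = Matrix.fromBlocks 0 (-1) 1 0)
    (P : Matrix (Fin n) (Fin n) ℝ)
    (hP : P = Matrix.of fun (i j : Fin n) => if i = j ∧ (i : ℕ) < k then (1 : ℝ) else 0)
    (Hk : Matrix (Fin n ⊕ Fin n) (Fin n ⊕ Fin n) ℝ)
    (hHk : Hk = Matrix.fromBlocks P (P - 1) (1 - P) P) :
    (Hkᵀ * J * Hk = J ∧ (J * Hk + Hkᵀ * J).rank = 2 * k) ∧
      ∃ H : Matrix (Fin n ⊕ Fin n) (Fin n ⊕ Fin n) ℝ,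
        Hᵀ * J * H = J ∧ (J * H + Hᵀ * J).rank = 2 * k := by
  have hPd : P = Matrix.diagonal (fun i : Fin n => if (i : ℕ) < k then (1 : ℝ) else 0) := by
    subst hP; ext i j
    simp only [Matrix.of_apply, Matrix.diagonal_apply]
    by_cases h : i = j
    · subst h; simp
    · simp [h]
  have hPP : P * P = P := by
    rw [hPd, Matrix.diagonal_mul_diagonal]
    have : (fun i : Fin n => (if (i:ℕ) < k then (1:ℝ) else 0) * (if (i:ℕ) < k then (1:ℝ) else 0))
        = fun i : Fin n => if (i:ℕ) < k then (1:ℝ) else 0 := by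
      funext i; split_ifs <;> simp
    rw [this]
  have hPT : Pᵀ = P := by rw [hPd, Matrix.diagonal_transpose]
  have hHkT : Hkᵀ = Matrix.fromBlocks P (1 - P) (P - 1) P := by
    rw [hHk, Matrix.fromBlocks_transpose, hPT, Matrix.transpose_sub, Matrix.transpose_sub,
      Matrix.transpose_one, hPT]
  have hsymp : Hkᵀ * J * Hk = J := by
    rw [hHkT, hJ, hHk, Matrix.fromBlocks_multiply, Matrix.fromBlocks_multiply]
    rw [Matrix.fromBlocks_inj]
    refine ⟨?_, ?_, ?_, ?_⟩ <;> first | noncomm_ring [hPP] | (try simp) <;> noncomm_ring [hPP]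
  set w : Fin n → ℝ := fun i => if (i : ℕ) < k then (2 : ℝ) else 0 with hw
  have h2 : Matrix.diagonal w = P + P := by
    rw [hPd]
    ext i j
    by_cases h : i = j
    · subst h; by_cases h2 : (i:ℕ) < k <;> simp [hw, h2, Matrix.diagonal_apply] <;> norm_num
    · simp [hw, Matrix.diagonal_apply, h]
  have hX : J * Hk + Hkᵀ * J = Matrix.diagonal (Sum.elim w w) * J := by
    rw [← Matrix.fromBlocks_diagonal, h2, hHkT, hJ, hHk,
      Matrix.fromBlocks_multiply, Matrix.fromBlocks_multiply,
      Matrix.fromBlocks_multiply, Matrix.fromBlocks_add]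
    rw [Matrix.fromBlocks_inj]
    refine ⟨?_, ?_, ?_, ?_⟩
    all_goals noncomm_ring [hPP]
  have hJu : IsUnit J.det := by
    have h1 : J * (-J) = 1 := by
      rw [hJ, Matrix.fromBlocks_neg, Matrix.fromBlocks_multiply]
      simp [← Matrix.fromBlocks_one]
    exact Matrix.isUnit_det_of_right_inverse h1
  have hcard1 : Fintype.card {i : Fin n // w i ≠ 0} = k := by
    rw [Fintype.card_subtype]
    rw [show (Finset.filter (fun i : Fin n => w i ≠ 0) Finset.univ)
        = Finset.filter (fun i : Fin n => (i:ℕ) < k) Finset.univ from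
      Finset.filter_congr (fun i _ => by by_cases h : (i:ℕ) < k <;> simp [hw, h])]
    exact card_aux n k hk
  have hrank : (J * Hk + Hkᵀ * J).rank = 2 * k := by
    rw [hX, Matrix.rank_mul_eq_left_of_isUnit_det _ _ hJu, Matrix.rank_diagonal]
    rw [Fintype.card_congr (Equiv.subtypeSum (p := fun x => Sum.elim w w x ≠ 0)),
      Fintype.card_sum]
    simp only [Sum.elim_inl, Sum.elim_inr] at *
    rw [two_mul, ← hcard1]; congr 1 <;> exact Fintype.card_congr' rfl
  exact ⟨⟨hsymp, hrank⟩, Hk, hsymp, hrank⟩
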